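/- Let X be a centered random variable with E X² = 1 and suppose t₀ > 0 satisfies E[X²·1_{|X|≤1/t₀}] ≥ 1/2. Then for all 0 < t ≤ t₀, |E[X·1_{|X|≤1/t}]| ≤ C·((1/t)·P(|X| > 1/t) + t·Var(X·1_{|X|≤1/t})) with C = max(2, 2t₀²). -/

import Mathlib

open MeasureTheory ProbabilityTheory
open scoped ENNReal

private lemma stmt6_arith (t t₀ m s v p : ℝ) (ht : 0 < t) (htt₀ : t ≤ t₀)
    (hA : |m| ≤ t * (1 - s)) (hB : m ^ 2 ≤ (1 - s) * p)
    (hs1 : 1 / 2 ≤ s) (hs2 : s ≤ 1) (hv : v = s - m ^ 2) (hv0 : 0 ≤ v) (hp0 : 0 ≤ p) :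
    t * |m| ≤ max 2 (2 * t₀ ^ 2) * (p + t ^ 2 * v) := by
  set C : ℝ := max 2 (2 * t₀ ^ 2) with hC
  have hC2 : (2 : ℝ) ≤ C := le_max_left _ _
  have hmabs : 0 ≤ |m| := abs_nonneg m
  have hsq : m ^ 2 = |m| ^ 2 := (sq_abs m).symm
  have hp2 : 2 * m ^ 2 ≤ p := by nlinarith
  rcases le_or_gt (m ^ 2) (1 / 4) with h | h
  · -- variance is large
    have hv4 : 1 / 4 ≤ v := by linarith
    have h1 : t * |m| ≤ t * (t * (1 - s)) := mul_le_mul_of_nonneg_left hA ht.le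
    have h2 : t * (t * (1 - s)) ≤ t ^ 2 * (1 / 2) := by nlinarith [sq_nonneg t]
    have h3 : t ^ 2 * (1 / 2) ≤ 2 * (t ^ 2 * v) := by nlinarith [sq_nonneg t]
    have h4 : 2 * (p + t ^ 2 * v) ≤ C * (p + t ^ 2 * v) := by
      apply mul_le_mul_of_nonneg_right hC2; positivity
    linarith
  · have hm12 : 1 / 2 < |m| := by nlinarith
    rcases le_or_gt t 2 with h2 | h2
    · have h5 : t * |m| ≤ 4 * m ^ 2 := by nlinarith
      have h4 : 2 * (p + t ^ 2 * v) ≤ C * (p + t ^ 2 * v) := by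
        apply mul_le_mul_of_nonneg_right hC2; positivity
      have h6 : t ^ 2 * v ≥ 0 := by positivity
      linarith
    · have hCt : 2 * t ^ 2 ≤ C := by
        refine le_trans ?_ (le_max_right _ _)
        nlinarith
      have hmt : |m| ≤ t / 2 := by nlinarith
      have hp12 : 1 / 2 < p := by linarith
      have h4 : 2 * t ^ 2 * (p + t ^ 2 * v) ≤ C * (p + t ^ 2 * v) := by
        apply mul_le_mul_of_nonneg_right hCt; positivity
      have h6 : t ^ 2 * v ≥ 0 := by positivity
      nlinarith

/-- If `X` is centered with `E X² = 1` and `E[X² 1_{|X|≤1/t₀}] ≥ 1/2` for some `t₀ > 0`,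
then for all `0 < t ≤ t₀`,
`|E[X 1_{|X|≤1/t}]| ≤ C ((1/t) P(|X| > 1/t) + t Var(X 1_{|X|≤1/t}))` with `C = max 2 (2 t₀²)`. -/
theorem stmt6 {Ω : Type*} [MeasureSpace Ω] [IsProbabilityMeasure (ℙ : Measure Ω)]
    (X : Ω → ℝ) (hmeas : Measurable X) (hL2 : MemLp X 2 ℙ)
    (hcent : ∫ ω, X ω ∂ℙ = 0) (hvar : ∫ ω, (X ω) ^ 2 ∂ℙ = 1)
    (t₀ : ℝ) (ht₀ : 0 < t₀)
    (htrunc : (1 / 2 : ℝ) ≤ ∫ ω, (if |X ω| ≤ 1 / t₀ then (X ω) ^ 2 else 0) ∂ℙ) :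
    ∀ t : ℝ, 0 < t → t ≤ t₀ →
      |∫ ω, (if |X ω| ≤ 1 / t then X ω else 0) ∂ℙ| ≤
        max 2 (2 * t₀ ^ 2) *
          ((1 / t) * (ℙ {ω | 1 / t < |X ω|}).toReal +
            t * variance (fun ω => if |X ω| ≤ 1 / t then X ω else 0) ℙ) := by
  intro t ht htt₀
  set c : ℝ := 1 / t with hc_def
  have hc : 0 < c := by positivity
  have hct₀ : 1 / t₀ ≤ c := one_div_le_one_div_of_le ht htt₀
  set Y : Ω → ℝ := fun ω => if |X ω| ≤ c then X ω else 0 with hY_def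
  set Z : Ω → ℝ := fun ω => if |X ω| ≤ c then (0 : ℝ) else X ω with hZ_def
  set G : Ω → ℝ := fun ω => if |X ω| ≤ c then (0 : ℝ) else 1 with hG_def
  have hset : MeasurableSet {ω | |X ω| ≤ c} := measurableSet_le hmeas.abs measurable_const
  have hYmeas : Measurable Y := Measurable.ite hset hmeas measurable_const
  have hZmeas : Measurable Z := Measurable.ite hset measurable_const hmeas
  have hGmeas : Measurable G := Measurable.ite hset measurable_const measurable_const
  have hXint : Integrable X ℙ := hL2.integrable one_le_two
  have hX2int : Integrable (fun ω => X ω ^ 2) ℙ := by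
    have := hL2.integrable_sq
    simpa [Pi.pow_apply] using this
  have hYint : Integrable Y ℙ := by
    refine hXint.mono hYmeas.aestronglyMeasurable (ae_of_all _ fun ω => ?_)
    simp only [hY_def, Real.norm_eq_abs]
    split_ifs <;> simp [abs_nonneg]
  have hZint : Integrable Z ℙ := by
    refine hXint.mono hZmeas.aestronglyMeasurable (ae_of_all _ fun ω => ?_)
    simp only [hZ_def, Real.norm_eq_abs]
    split_ifs <;> simp [abs_nonneg]
  have hTint : Integrable (fun ω => if |X ω| ≤ c then X ω ^ 2 else 0) ℙ := by
    refine hX2int.mono ((hmeas.pow_const 2).ite hset measurable_const).aestronglyMeasurable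
      (ae_of_all _ fun ω => ?_)
    simp only [Real.norm_eq_abs]
    split_ifs <;> simp [abs_nonneg, sq_nonneg, abs_of_nonneg (sq_nonneg (X ω))]
  have hT0int : Integrable (fun ω => if |X ω| ≤ 1 / t₀ then X ω ^ 2 else 0) ℙ := by
    refine hX2int.mono ((hmeas.pow_const 2).ite
      (measurableSet_le hmeas.abs measurable_const) measurable_const).aestronglyMeasurable
      (ae_of_all _ fun ω => ?_)
    simp only [Real.norm_eq_abs]
    split_ifs <;> simp [abs_nonneg, sq_nonneg, abs_of_nonneg (sq_nonneg (X ω))]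
  have hZ2int : Integrable (fun ω => Z ω ^ 2) ℙ := by
    refine hX2int.mono ((hZmeas.pow_const 2)).aestronglyMeasurable (ae_of_all _ fun ω => ?_)
    simp only [hZ_def, Real.norm_eq_abs]
    split_ifs <;> simp [abs_nonneg, sq_nonneg, abs_of_nonneg (sq_nonneg (X ω))]
  set m : ℝ := ∫ ω, Y ω ∂ℙ with hm_def
  set s : ℝ := ∫ ω, (if |X ω| ≤ c then X ω ^ 2 else 0) ∂ℙ with hs_def
  set p : ℝ := (ℙ {ω | c < |X ω|}).toReal with hp_def
  have hp0 : 0 ≤ p := ENNReal.toReal_nonneg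
  -- m = - ∫ Z
  have hmZ : m = -∫ ω, Z ω ∂ℙ := by
    have hsum : ∫ ω, (Y ω + Z ω) ∂ℙ = 0 := by
      rw [show (fun ω => Y ω + Z ω) = X from funext fun ω => by
        simp only [hY_def, hZ_def]; split_ifs <;> ring]
      exact hcent
    rw [integral_add hYint hZint] at hsum
    linarith
  -- s bounds
  have hs_half : 1 / 2 ≤ s := by
    refine le_trans htrunc (integral_mono hT0int hTint fun ω => ?_)
    by_cases h : |X ω| ≤ 1 / t₀
    · rw [if_pos h, if_pos (le_trans h hct₀)]
    · rw [if_neg h]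
      split_ifs <;> simp [sq_nonneg]
  have hs_one : s ≤ 1 := by
    rw [← hvar]
    refine integral_mono hTint hX2int fun ω => ?_
    split_ifs <;> simp [sq_nonneg]
  -- ∫ Z² = 1 - s
  have hZ2 : ∫ ω, Z ω ^ 2 ∂ℙ = 1 - s := by
    have heq : ∀ ω, Z ω ^ 2 = X ω ^ 2 - (if |X ω| ≤ c then X ω ^ 2 else 0) := fun ω => by
      simp only [hZ_def]; split_ifs <;> ring
    rw [show (fun ω => Z ω ^ 2) = fun ω => X ω ^ 2 - (if |X ω| ≤ c then X ω ^ 2 else 0) from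
      funext heq, integral_sub hX2int hTint, hvar, hs_def]
  -- |m| ≤ t (1 - s)
  have hA : |m| ≤ t * (1 - s) := by
    rw [hmZ, abs_neg]
    calc |∫ ω, Z ω ∂ℙ| ≤ ∫ ω, |Z ω| ∂ℙ := by
          simpa [Real.norm_eq_abs] using norm_integral_le_integral_norm Z (μ := ℙ)
      _ ≤ ∫ ω, t * Z ω ^ 2 ∂ℙ := by
          refine integral_mono hZint.abs (hZ2int.const_mul t) fun ω => ?_
          simp only [hZ_def]
          split_ifs with h
          · simp
          · push_neg at h
            have h1 : 1 < t * |X ω| := by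
              have := (mul_lt_mul_iff_right₀ ht).mpr h
              rwa [hc_def, mul_one_div, div_self ht.ne'] at this
            nlinarith [abs_nonneg (X ω), sq_abs (X ω)]
      _ = t * (1 - s) := by rw [integral_const_mul, hZ2]
  -- Cauchy-Schwarz: m² ≤ (1-s) p
  have hGone : ∫ ω, G ω ∂ℙ = p := by
    have hGind : G = Set.indicator {ω | |X ω| ≤ c}ᶜ (fun _ => (1 : ℝ)) := by
      funext ω
      by_cases h : |X ω| ≤ c <;> simp [hG_def, h, Set.indicator]
    rw [hGind, hp_def]
    rw [show {ω | c < |X ω|} = {ω | |X ω| ≤ c}ᶜ from by ext ω; simp [not_le]]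
    exact (integral_indicator_one (μ := ℙ) hset.compl).trans (measureReal_def _ _)
  have hB : m ^ 2 ≤ (1 - s) * p := by
    have h1s : (0 : ℝ) ≤ 1 - s := by linarith
    have hpq : Real.HolderConjugate 2 2 := Real.HolderConjugate.two_two
    have hZmem : MemLp (fun ω => |Z ω|) (ENNReal.ofReal 2) ℙ := by
      rw [show ENNReal.ofReal 2 = 2 by norm_num]
      refine hL2.of_le hZmeas.abs.aestronglyMeasurable (ae_of_all _ fun ω => ?_)
      simp only [hZ_def, Real.norm_eq_abs, abs_abs]
      split_ifs <;> simp [abs_nonneg]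
    have hGmem : MemLp G (ENNReal.ofReal 2) ℙ := by
      refine (memLp_const (1 : ℝ)).of_le hGmeas.aestronglyMeasurable (ae_of_all _ fun ω => ?_)
      simp only [hG_def, Real.norm_eq_abs]
      split_ifs <;> simp
    have hCS := integral_mul_le_Lp_mul_Lq_of_nonneg (μ := ℙ) hpq
      (ae_of_all _ fun ω => abs_nonneg (Z ω))
      (ae_of_all _ fun ω => by simp only [hG_def]; split_ifs <;> norm_num) hZmem hGmem
    have hZG : ∀ ω, |Z ω| * G ω = |Z ω| := fun ω => by
      simp only [hZ_def, hG_def]; split_ifs <;> simp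
    have hZrpow : ∫ ω, |Z ω| ^ (2 : ℝ) ∂ℙ = 1 - s := by
      rw [← hZ2]
      refine integral_congr_ae (ae_of_all _ fun ω => ?_)
      show |Z ω| ^ (2 : ℝ) = Z ω ^ 2
      rw [Real.rpow_two, sq_abs]
    have hGrpow : ∫ ω, G ω ^ (2 : ℝ) ∂ℙ = p := by
      rw [← hGone]
      refine integral_congr_ae (ae_of_all _ fun ω => ?_)
      show G ω ^ (2 : ℝ) = G ω
      simp only [hG_def]; split_ifs <;> simp
    simp only [hZG, hZrpow, hGrpow] at hCS
    have habs : |m| ≤ (1 - s) ^ ((1 : ℝ) / 2) * p ^ ((1 : ℝ) / 2) := by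
      rw [hmZ, abs_neg]
      refine le_trans ?_ hCS
      simpa [Real.norm_eq_abs] using norm_integral_le_integral_norm Z (μ := ℙ)
    have e1 : ((1 - s) ^ ((1 : ℝ) / 2)) ^ 2 = 1 - s := by
      rw [← Real.rpow_natCast ((1 - s) ^ ((1:ℝ)/2)) 2, ← Real.rpow_mul h1s]
      norm_num
    have e2 : (p ^ ((1 : ℝ) / 2)) ^ 2 = p := by
      rw [← Real.rpow_natCast (p ^ ((1:ℝ)/2)) 2, ← Real.rpow_mul hp0]
      norm_num
    calc m ^ 2 = |m| ^ 2 := (sq_abs m).symm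
      _ ≤ ((1 - s) ^ ((1:ℝ)/2) * p ^ ((1:ℝ)/2)) ^ 2 := by
          apply pow_le_pow_left₀ (abs_nonneg m) habs
      _ = (1 - s) * p := by rw [mul_pow, e1, e2]
  -- variance
  have hYmem : MemLp Y 2 ℙ := by
    refine hL2.of_le hYmeas.aestronglyMeasurable (ae_of_all _ fun ω => ?_)
    simp only [hY_def, Real.norm_eq_abs]
    split_ifs <;> simp [abs_nonneg]
  have hvarY : variance Y ℙ = s - m ^ 2 := by
    rw [variance_eq_sub hYmem]
    congr 1
    rw [hs_def]
    refine integral_congr_ae (ae_of_all _ fun ω => ?_)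
    simp only [Pi.pow_apply, hY_def]
    split_ifs <;> simp
  have hv0 : 0 ≤ variance Y ℙ := variance_nonneg _ _
  -- conclude
  set v : ℝ := variance Y ℙ with hv_def
  have key := stmt6_arith t t₀ m s v p ht htt₀ hA hB hs_half hs_one hvarY hv0 hp0
  have hgoal : |m| ≤ max 2 (2 * t₀ ^ 2) * (c * p + t * v) := by
    rw [← mul_le_mul_iff_right₀ ht]
    calc t * |m| ≤ max 2 (2 * t₀ ^ 2) * (p + t ^ 2 * v) := key
      _ = t * (max 2 (2 * t₀ ^ 2) * (c * p + t * v)) := by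
          have h1 : t * c = 1 := by rw [hc_def]; field_simp
          linear_combination (-(max 2 (2 * t₀ ^ 2) * p)) * h1
  exact hgoal
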